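/- arXiv:math/0007211 — 7 statements merged into one kernel-verified Lean document; each statement's English description precedes it below -/
import Mathlib

section
/- Let G be a profinite group generated by subgroups G₁, …, Gₙ. Suppose that for every finite group A, finite group B, epimorphisms α : G → B and β : A → B, and homomorphisms βᵢ : α(Gᵢ) → A with β ∘ βᵢ = id on α(Gᵢ) for each i, there exists a continuous homomorphism γ : G → A with β ∘ γ = α and γ restricted to Gᵢ equal to βᵢ ∘ α restricted to Gᵢ for each i. Then G is the free profinite product of G₁, …, Gₙ. -/
/-- `G` together with the inclusions of the subgroups `Gs i` is the free profinite product
of the `Gs i`: every family of continuous homomorphisms from the `Gs i` into a profinite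
group `H` extends uniquely to a continuous homomorphism `G →* H`. -/
def IsFreeProfiniteProductOfSubgroups {G : Type u} [Group G] [TopologicalSpace G]
    {n : ℕ} (Gs : Fin n → Subgroup G) : Prop :=
  ∀ (H : Type u) (_ : Group H) (_ : TopologicalSpace H) (_ : IsTopologicalGroup H)
    (_ : CompactSpace H) (_ : T2Space H) (_ : TotallyDisconnectedSpace H)
    (γ : ∀ i, ↥(Gs i) →* H), (∀ i, Continuous (γ i)) →
      ∃! δ : G →* H, Continuous δ ∧ ∀ i, ∀ x : G, ∀ hx : x ∈ Gs i, δ x = γ i ⟨x, hx⟩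

/-- In a profinite group, every open neighbourhood of `1` contains an open normal subgroup. -/
lemma aux_exists_openNormal {H : Type u} [Group H] [TopologicalSpace H] [IsTopologicalGroup H]
    [CompactSpace H] [T2Space H] [TotallyDisconnectedSpace H] {V : Set H}
    (hV : IsOpen V) (h1 : (1 : H) ∈ V) :
    ∃ N : OpenNormalSubgroup H, (N : Set H) ⊆ V := by
  obtain ⟨W, hW, h1W, hWV⟩ := compact_exists_isClopen_in_isOpen hV h1
  obtain ⟨N, hN⟩ := IsTopologicalGroup.exist_openNormalSubgroup_sub_clopen_nhds_of_one hW h1W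
  exact ⟨N, hN.trans hWV⟩

/-- The intersection of all open normal subgroups of a profinite group is trivial. -/
lemma aux_mem_all_openNormal {H : Type u} [Group H] [TopologicalSpace H] [IsTopologicalGroup H]
    [CompactSpace H] [T2Space H] [TotallyDisconnectedSpace H] (x : H)
    (hx : ∀ N : OpenNormalSubgroup H, x ∈ N) : x = 1 := by
  by_contra hne
  have hV : IsOpen ({x}ᶜ : Set H) := isOpen_compl_singleton
  have h1 : (1 : H) ∈ ({x}ᶜ : Set H) := by simpa using (Ne.symm hne)
  obtain ⟨N, hN⟩ := aux_exists_openNormal hV h1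
  exact (hN (hx N)) rfl

theorem stmt0_aux {G : Type u} [Group G] [TopologicalSpace G] [IsTopologicalGroup G]
    [CompactSpace G] [T2Space G] [TotallyDisconnectedSpace G]
    {n : ℕ} (Gs : Fin n → Subgroup G)
    (hgen : (⨆ i, Gs i).topologicalClosure = ⊤)
    -- every finite locally split embedding problem has a locally exact solution:
    (hEP : ∀ (A B : Type u) (_ : Group A) (_ : Group B) (_ : Finite A) (_ : Finite B)
      (α : G →* B) (β : A →* B) (βi : ∀ i, ↥((Gs i).map α) →* A),
      Function.Surjective α → IsOpen ((α.ker : Subgroup G) : Set G) →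
      Function.Surjective β →
      (∀ i, ∀ b : ↥((Gs i).map α), β (βi i b) = (b : B)) →
      ∃ γ : G →* A, IsOpen ((γ.ker : Subgroup G) : Set G) ∧ (∀ g, β (γ g) = α g) ∧
        ∀ i, ∀ g : G, ∀ hg : g ∈ Gs i,
          γ g = βi i ⟨α g, Subgroup.mem_map_of_mem α hg⟩)
    (H : Type u) [Group H] [TopologicalSpace H] [IsTopologicalGroup H]
    [CompactSpace H] [T2Space H] [TotallyDisconnectedSpace H]
    (γ : ∀ i, ↥(Gs i) →* H) (hγ : ∀ i, Continuous (γ i)) :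
    ∃! δ : G →* H, Continuous δ ∧ ∀ i, ∀ x : G, ∀ hx : x ∈ Gs i, δ x = γ i ⟨x, hx⟩ := by
  -- A closed subgroup containing all the `Gs i` is everything.
  have htop : ∀ S : Subgroup G, IsClosed (S : Set G) → (∀ i, Gs i ≤ S) → S = ⊤ := by
    intro S hScl hSle
    have h2 := Subgroup.topologicalClosure_minimal _ (iSup_le hSle) hScl
    rw [hgen] at h2
    exact top_le_iff.mp h2
  -- Step 1: existence of local solutions modulo each open normal subgroup of `H`.
  have step1 : ∀ N : OpenNormalSubgroup H, ∃ δN : G →* H ⧸ N.toSubgroup,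
      IsOpen ((δN.ker : Subgroup G) : Set G) ∧
      ∀ i, ∀ g : G, ∀ hg : g ∈ Gs i, δN g = QuotientGroup.mk (γ i ⟨g, hg⟩) := by
    intro N
    haveI : Finite (H ⧸ N.toSubgroup) :=
      Subgroup.quotient_finite_of_isOpen _ N.toOpenSubgroup.isOpen
    -- the local maps to the finite quotient
    set f : ∀ i, ↥(Gs i) →* H ⧸ N.toSubgroup :=
      fun i => (QuotientGroup.mk' N.toSubgroup).comp (γ i) with hf
    -- choose an open `Vᵢ ⊆ G` cutting out the kernel of `f i` on `Gs i`
    have hVex : ∀ i, ∃ V : Set G, IsOpen V ∧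
        Subtype.val ⁻¹' V = ((γ i) ⁻¹' ((N.toSubgroup : Subgroup H) : Set H) : Set ↥(Gs i)) := by
      intro i
      have : IsOpen ((γ i) ⁻¹' ((N.toSubgroup : Subgroup H) : Set H)) :=
        (hγ i).isOpen_preimage _ N.toOpenSubgroup.isOpen
      exact isOpen_induced_iff.mp this
    choose V hVopen hVeq using hVex
    have h1V : (1 : G) ∈ ⋂ i, V i := by
      refine Set.mem_iInter.mpr fun i => ?_
      have : ((⟨1, (Gs i).one_mem⟩ : ↥(Gs i)) : G) ∈ V i := by
        rw [← Set.mem_preimage, hVeq i]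
        have h1' : (⟨1, (Gs i).one_mem⟩ : ↥(Gs i)) = 1 := rfl
        show γ i ⟨1, (Gs i).one_mem⟩ ∈ (N.toSubgroup : Set H)
        rw [h1', map_one]
        exact N.toSubgroup.one_mem
      simpa using this
    obtain ⟨U, hU⟩ := aux_exists_openNormal (H := G) (isOpen_iInter_of_finite hVopen) h1V
    -- the finite embedding problem
    haveI : Finite (G ⧸ U.toSubgroup) :=
      Subgroup.quotient_finite_of_isOpen _ U.toOpenSubgroup.isOpen
    set α : G →* G ⧸ U.toSubgroup := QuotientGroup.mk' U.toSubgroup with hα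
    have hαsurj : Function.Surjective α := QuotientGroup.mk'_surjective _
    have hαker : IsOpen ((α.ker : Subgroup G) : Set G) := by
      rw [hα, QuotientGroup.ker_mk']
      exact U.toOpenSubgroup.isOpen
    -- `f i` kills the kernel of the restriction of `α` to `Gs i`.
    have hkill : ∀ i (x : ↥(Gs i)), (x : G) ∈ U.toSubgroup → f i x = 1 := by
      intro i x hxU
      have hxV : (x : G) ∈ V i := Set.mem_iInter.mp (hU hxU) i
      have : γ i x ∈ N.toSubgroup := by
        have := (hVeq i) ▸ (Set.mem_preimage.mpr hxV)
        exact this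
      simpa [hf, QuotientGroup.eq_one_iff] using this
    -- the restrictions of `α` to the `Gs i`, and their kernels
    set αr : ∀ i, ↥(Gs i) →* ↥((Gs i).map α) := fun i => α.subgroupMap (Gs i) with hαr
    have hαrsurj : ∀ i, Function.Surjective (αr i) := fun i => α.subgroupMap_surjective (Gs i)
    have hαrker : ∀ i, (αr i).ker ≤ (f i).ker := by
      intro i x hx
      have hx' : α (x : G) = 1 := by
        have h0 : ((αr i x : ↥((Gs i).map α)) : G ⧸ U.toSubgroup) = α (x : G) := rfl
        rw [← h0, hx]; rfl
      have hxU : (x : G) ∈ U.toSubgroup := by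
        have := (QuotientGroup.eq_one_iff (x : G)).mp hx'
        exact this
      exact hkill i x hxU
    -- lift `f i` through `αr i`
    set e : ∀ i, ↥(Gs i) ⧸ (αr i).ker ≃* ↥((Gs i).map α) :=
      fun i => QuotientGroup.quotientKerEquivOfSurjective (αr i) (hαrsurj i) with he
    set fbar : ∀ i, ↥((Gs i).map α) →* H ⧸ N.toSubgroup := fun i =>
      (QuotientGroup.lift (αr i).ker (f i) (hαrker i)).comp (e i).symm.toMonoidHom with hfbar
    have hfbar_eq : ∀ i (x : ↥(Gs i)), fbar i (αr i x) = f i x := by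
      intro i x
      have hsymm : (e i).symm (αr i x) = QuotientGroup.mk x := by
        rw [MulEquiv.symm_apply_eq]
        simp [he, QuotientGroup.quotientKerEquivOfSurjective]
      simp only [hfbar, MonoidHom.comp_apply, MulEquiv.coe_toMonoidHom, hsymm]
      exact QuotientGroup.lift_mk' _ _ x
    -- the split embedding problem data
    set β : (G ⧸ U.toSubgroup) × (H ⧸ N.toSubgroup) →* G ⧸ U.toSubgroup :=
      MonoidHom.fst _ _ with hβ
    set βi : ∀ i, ↥((Gs i).map α) →* (G ⧸ U.toSubgroup) × (H ⧸ N.toSubgroup) :=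
      fun i => (((Gs i).map α).subtype).prod (fbar i) with hβi
    have hβsurj : Function.Surjective β := fun b => ⟨(b, 1), rfl⟩
    have hβsec : ∀ i, ∀ b : ↥((Gs i).map α), β (βi i b) = (b : G ⧸ U.toSubgroup) :=
      fun i b => rfl
    obtain ⟨γ', hγ'ker, hγ'β, hγ'res⟩ :=
      hEP ((G ⧸ U.toSubgroup) × (H ⧸ N.toSubgroup)) (G ⧸ U.toSubgroup)
        inferInstance inferInstance inferInstance inferInstance
        α β βi hαsurj hαker hβsurj hβsec
    refine ⟨(MonoidHom.snd _ _).comp γ', ?_, ?_⟩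
    · refine Subgroup.isOpen_mono (H₁ := γ'.ker) ?_ hγ'ker
      intro g hg
      simp only [MonoidHom.mem_ker] at hg ⊢
      rw [MonoidHom.comp_apply, hg, map_one]
    · intro i g hg
      have h1 : γ' g = βi i ⟨α g, Subgroup.mem_map_of_mem α hg⟩ := hγ'res i g hg
      have h2 : (⟨α g, Subgroup.mem_map_of_mem α hg⟩ : ↥((Gs i).map α)) = αr i ⟨g, hg⟩ := by
        apply Subtype.ext
        rfl
      calc ((MonoidHom.snd _ _).comp γ') g
          = (βi i ⟨α g, Subgroup.mem_map_of_mem α hg⟩).2 := by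
            rw [MonoidHom.comp_apply, h1]
            rfl
        _ = fbar i ⟨α g, Subgroup.mem_map_of_mem α hg⟩ := rfl
        _ = fbar i (αr i ⟨g, hg⟩) := by rw [h2]
        _ = f i ⟨g, hg⟩ := hfbar_eq i ⟨g, hg⟩
        _ = QuotientGroup.mk (γ i ⟨g, hg⟩) := rfl
  -- Step 2: uniqueness of local solutions.
  have step2 : ∀ (N : OpenNormalSubgroup H) (δ₁ δ₂ : G →* H ⧸ N.toSubgroup),
      IsOpen ((δ₁.ker : Subgroup G) : Set G) → IsOpen ((δ₂.ker : Subgroup G) : Set G) →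
      (∀ i, ∀ g : G, ∀ hg : g ∈ Gs i, δ₁ g = QuotientGroup.mk (γ i ⟨g, hg⟩)) →
      (∀ i, ∀ g : G, ∀ hg : g ∈ Gs i, δ₂ g = QuotientGroup.mk (γ i ⟨g, hg⟩)) →
      δ₁ = δ₂ := by
    intro N δ₁ δ₂ h₁ h₂ hr₁ hr₂
    have hker_le : δ₁.ker ⊓ δ₂.ker ≤ δ₁.eqLocus δ₂ := by
      intro x hx
      have e1 : δ₁ x = 1 := hx.1
      have e2 : δ₂ x = 1 := hx.2
      show δ₁ x = δ₂ x
      rw [e1, e2]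
    have hopen : IsOpen ((δ₁.eqLocus δ₂ : Subgroup G) : Set G) := by
      refine Subgroup.isOpen_mono hker_le ?_
      rw [Subgroup.coe_inf]
      exact h₁.inter h₂
    have hclosed := Subgroup.isClosed_of_isOpen _ hopen
    have hle : ∀ i, Gs i ≤ δ₁.eqLocus δ₂ := by
      intro i g hg
      show δ₁ g = δ₂ g
      rw [hr₁ i g hg, hr₂ i g hg]
    have htopeq := htop _ hclosed hle
    ext g
    have hmem : g ∈ δ₁.eqLocus δ₂ := by rw [htopeq]; trivial
    exact hmem
  -- choose the local solutions
  choose δm hδm_ker hδm_res using step1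
  -- compatibility of the local solutions
  have compat : ∀ (N M : OpenNormalSubgroup H) (hNM : N.toSubgroup ≤ M.toSubgroup) (g : G),
      QuotientGroup.map N.toSubgroup M.toSubgroup (MonoidHom.id H)
        (fun x hx => hNM hx) (δm N g) = δm M g := by
    intro N M hNM g
    set q : H ⧸ N.toSubgroup →* H ⧸ M.toSubgroup :=
      QuotientGroup.map N.toSubgroup M.toSubgroup (MonoidHom.id H) (fun x hx => hNM hx) with hq
    have : q.comp (δm N) = δm M := by
      refine step2 M _ _ ?_ (hδm_ker M) ?_ (hδm_res M)
      · refine Subgroup.isOpen_mono (H₁ := (δm N).ker) ?_ (hδm_ker N)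
        intro x hx
        simp only [MonoidHom.mem_ker] at hx ⊢
        rw [MonoidHom.comp_apply, hx, map_one]
      · intro i g hg
        rw [MonoidHom.comp_apply, hδm_res N i g hg, hq]
        rfl
    exact DFunLike.congr_fun this g
  -- Step 3: glue to a map into `H` by compactness.
  haveI : Nonempty (OpenNormalSubgroup H) :=
    ⟨{ toOpenSubgroup := ⊤, isNormal' := (by exact inferInstanceAs (⊤ : Subgroup H).Normal) }⟩
  have key : ∀ g : G, ∃ h : H, ∀ N : OpenNormalSubgroup H,
      (QuotientGroup.mk h : H ⧸ N.toSubgroup) = δm N g := by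
    intro g
    set t : OpenNormalSubgroup H → Set H :=
      fun N => {h : H | (QuotientGroup.mk h : H ⧸ N.toSubgroup) = δm N g} with ht
    have htne : ∀ N, (t N).Nonempty := by
      intro N
      obtain ⟨h, hh⟩ := QuotientGroup.mk'_surjective N.toSubgroup (δm N g)
      exact ⟨h, hh⟩
    have htcl : ∀ N, IsClosed (t N) := by
      intro N
      obtain ⟨h0, hh0⟩ := htne N
      have : t N = (fun h : H => h⁻¹ * h0) ⁻¹' ((N.toSubgroup : Subgroup H) : Set H) := by
        ext h
        simp only [ht, Set.mem_setOf_eq, Set.mem_preimage, SetLike.mem_coe]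
        constructor
        · intro hh
          exact QuotientGroup.eq.mp (hh.trans hh0.symm)
        · intro hh
          exact (QuotientGroup.eq.mpr hh).trans hh0
      rw [this]
      exact IsClosed.preimage (continuous_inv.mul continuous_const)
        (Subgroup.isClosed_of_isOpen _ N.toOpenSubgroup.isOpen)
    have htdir : Directed (· ⊇ ·) t := by
      intro N M
      refine ⟨N ⊓ M, ?_, ?_⟩
      · intro h hh
        have hle : (N ⊓ M).toSubgroup ≤ N.toSubgroup := fun x hx => hx.1
        have := compat (N ⊓ M) N hle g
        show (QuotientGroup.mk h : H ⧸ N.toSubgroup) = δm N g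
        rw [← this, ← hh]
        rfl
      · intro h hh
        have hle : (N ⊓ M).toSubgroup ≤ M.toSubgroup := fun x hx => hx.2
        have := compat (N ⊓ M) M hle g
        show (QuotientGroup.mk h : H ⧸ M.toSubgroup) = δm M g
        rw [← this, ← hh]
        rfl
    obtain ⟨h, hh⟩ := IsCompact.nonempty_iInter_of_directed_nonempty_isCompact_isClosed
      t htdir htne (fun N => (htcl N).isCompact) htcl
    exact ⟨h, fun N => Set.mem_iInter.mp hh N⟩
  choose Φ hΦ using key
  have Φuniq : ∀ (g : G) (h : H),
      (∀ N : OpenNormalSubgroup H, (QuotientGroup.mk h : H ⧸ N.toSubgroup) = δm N g) →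
      h = Φ g := by
    intro g h hh
    have : ∀ N : OpenNormalSubgroup H, h⁻¹ * Φ g ∈ N.toSubgroup := by
      intro N
      exact QuotientGroup.eq.mp ((hh N).trans (hΦ g N).symm)
    have h1 : h⁻¹ * Φ g = 1 := aux_mem_all_openNormal _ this
    exact (inv_mul_eq_one.mp h1)
  -- the glued homomorphism
  set δ : G →* H :=
    { toFun := Φ
      map_one' := by
        refine (Φuniq 1 1 fun N => ?_).symm
        rw [map_one]
        rfl
      map_mul' := by
        intro a b
        refine (Φuniq (a * b) (Φ a * Φ b) fun N => ?_).symm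
        rw [QuotientGroup.mk_mul, hΦ a N, hΦ b N, map_mul] } with hδdef
  have hδ_apply : ∀ g, δ g = Φ g := fun g => rfl
  have hδ_res : ∀ i, ∀ x : G, ∀ hx : x ∈ Gs i, δ x = γ i ⟨x, hx⟩ := by
    intro i x hx
    rw [hδ_apply]
    exact (Φuniq x (γ i ⟨x, hx⟩) fun N => (hδm_res N i x hx).symm).symm
  have hδ_proj : ∀ (N : OpenNormalSubgroup H) (g : G),
      (QuotientGroup.mk (δ g) : H ⧸ N.toSubgroup) = δm N g := fun N g => hΦ g N
  -- continuity
  have hδ_cont : Continuous δ := by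
    apply continuous_of_continuousAt_one δ
    rw [ContinuousAt, map_one]
    intro Uset hUset
    rw [Filter.mem_map]
    obtain ⟨Vset, hVsub, hVopen, h1V⟩ := mem_nhds_iff.mp hUset
    obtain ⟨N, hN⟩ := aux_exists_openNormal hVopen h1V
    have hsub : (((δm N).ker : Subgroup G) : Set G) ⊆ δ ⁻¹' Uset := by
      intro x hx
      have hx1 : δm N x = 1 := hx
      have : (QuotientGroup.mk (δ x) : H ⧸ N.toSubgroup) = 1 := by
        rw [hδ_proj N x, hx1]
      have hmem : δ x ∈ N.toSubgroup := (QuotientGroup.eq_one_iff _).mp this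
      exact Set.mem_preimage.mpr (hVsub (hN hmem))
    exact Filter.mem_of_superset
      ((hδm_ker N).mem_nhds (by simp [Subgroup.one_mem])) hsub
  -- conclusion
  refine ⟨δ, ⟨hδ_cont, hδ_res⟩, ?_⟩
  rintro δ' ⟨hc', hr'⟩
  have hclosed : IsClosed ((δ'.eqLocus δ : Subgroup G) : Set G) := by
    have : ((δ'.eqLocus δ : Subgroup G) : Set G) = {x : G | δ' x = δ x} := rfl
    rw [this]
    exact isClosed_eq hc' hδ_cont
  have hle : ∀ i, Gs i ≤ δ'.eqLocus δ := by
    intro i g hg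
    show δ' g = δ g
    rw [hr' i g hg, hδ_res i g hg]
  have htopeq := htop _ hclosed hle
  ext g
  have hmem : g ∈ δ'.eqLocus δ := by rw [htopeq]; trivial
  exact hmem

theorem stmt0 {G : Type u} [Group G] [TopologicalSpace G] [IsTopologicalGroup G]
    [CompactSpace G] [T2Space G] [TotallyDisconnectedSpace G]
    {n : ℕ} (Gs : Fin n → Subgroup G)
    (hgen : (⨆ i, Gs i).topologicalClosure = ⊤)
    -- every finite locally split embedding problem has a locally exact solution:
    (hEP : ∀ (A B : Type u) (_ : Group A) (_ : Group B) (_ : Finite A) (_ : Finite B)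
      (α : G →* B) (β : A →* B) (βi : ∀ i, ↥((Gs i).map α) →* A),
      Function.Surjective α → IsOpen ((α.ker : Subgroup G) : Set G) →
      Function.Surjective β →
      (∀ i, ∀ b : ↥((Gs i).map α), β (βi i b) = (b : B)) →
      ∃ γ : G →* A, IsOpen ((γ.ker : Subgroup G) : Set G) ∧ (∀ g, β (γ g) = α g) ∧
        ∀ i, ∀ g : G, ∀ hg : g ∈ Gs i,
          γ g = βi i ⟨α g, Subgroup.mem_map_of_mem α hg⟩) :
    IsFreeProfiniteProductOfSubgroups Gs := by
  intro H iGr iTop iTG iComp iT2 iTD γ hγ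
  exact @stmt0_aux G _ _ _ _ _ _ n Gs hgen hEP H iGr iTop iTG iComp iT2 iTD γ hγ
end

section
/- Let G be a profinite group with subgroups G₁, …, Gₙ such that G is projective relative to G₁, …, Gₙ. Then every embedding problem α : G → B, β : A → B (A, B profinite, α, β epimorphisms) admitting, for each i, a 'local' solution γᵢ : Gᵢ → A with α|Gᵢ = β ∘ γᵢ, has a 'global' solution γ : G → A with α = β ∘ γ. -/
/-- A profinite group `G` is projective relative to subgroups `Gs i`: every continuous
epimorphism `π : H ↠ G` of profinite groups which splits locally over each `Gs i`
splits globally. -/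
def RelativelyProjective {G : Type u} [Group G] [TopologicalSpace G]
    {n : ℕ} (Gs : Fin n → Subgroup G) : Prop :=
  ∀ (H : Type u) (_ : Group H) (_ : TopologicalSpace H) (_ : IsTopologicalGroup H)
    (_ : CompactSpace H) (_ : T2Space H) (_ : TotallyDisconnectedSpace H)
    (π : H →* G), Continuous π → Function.Surjective π →
    (∀ i, ∃ ρi : ↥(Gs i) →* H, Continuous ρi ∧ ∀ x : ↥(Gs i), π (ρi x) = (x : G)) →
    ∃ ρ : G →* H, Continuous ρ ∧ ∀ g : G, π (ρ g) = g

theorem stmt2 {G : Type u} [Group G] [TopologicalSpace G] [IsTopologicalGroup G]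
    [CompactSpace G] [T2Space G] [TotallyDisconnectedSpace G]
    {n : ℕ} (Gs : Fin n → Subgroup G)
    (hproj : RelativelyProjective Gs)
    -- an embedding problem given by profinite `A`, `B`:
    (A B : Type u) [Group A] [Group B]
    [TopologicalSpace A] [IsTopologicalGroup A] [CompactSpace A] [T2Space A]
    [TotallyDisconnectedSpace A]
    [TopologicalSpace B] [IsTopologicalGroup B] [CompactSpace B] [T2Space B]
    [TotallyDisconnectedSpace B]
    (α : G →* B) (β : A →* B) (hα : Continuous α) (hαs : Function.Surjective α)
    (hβ : Continuous β) (hβs : Function.Surjective β)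
    -- local solutions on each `Gs i`:
    (hloc : ∀ i, ∃ γi : ↥(Gs i) →* A, Continuous γi ∧
      ∀ x : ↥(Gs i), β (γi x) = α (x : G)) :
    -- global solution:
    ∃ γ : G →* A, Continuous γ ∧ ∀ g : G, β (γ g) = α g := by
  classical
  -- the fibre product
  set H : Subgroup (A × G) :=
    { carrier := {p | β p.1 = α p.2}
      one_mem' := by simp
      mul_mem' := by intro p q hp hq; simp_all [Set.mem_setOf_eq, map_mul]
      inv_mem' := by intro p hp; simp_all [Set.mem_setOf_eq, map_inv] } with hHdef
  have hmem : ∀ p : A × G, p ∈ H ↔ β p.1 = α p.2 := fun p => Iff.rfl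
  have hclosed : IsClosed (H : Set (A × G)) :=
    isClosed_eq (hβ.comp continuous_fst) (hα.comp continuous_snd)
  haveI : CompactSpace ↥H := isCompact_iff_compactSpace.mp (hclosed.isCompact)
  let π : ↥H →* G := (MonoidHom.snd A G).comp H.subtype
  have hπc : Continuous π := continuous_snd.comp continuous_subtype_val
  have hπs : Function.Surjective π := by
    intro g
    obtain ⟨a, ha⟩ := hβs (α g)
    exact ⟨⟨(a, g), ha⟩, rfl⟩
  have hlocsplit : ∀ i, ∃ ρi : ↥(Gs i) →* ↥H, Continuous ρi ∧
      ∀ x : ↥(Gs i), π (ρi x) = (x : G) := by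
    intro i
    obtain ⟨γi, hγic, hγi⟩ := hloc i
    refine ⟨(γi.prod (Gs i).subtype).codRestrict H (fun x => ?_), ?_, fun x => rfl⟩
    · exact hγi x
    · exact Continuous.subtype_mk (hγic.prodMk continuous_subtype_val) _
  obtain ⟨ρ, hρc, hρ⟩ := hproj ↥H inferInstance inferInstance inferInstance inferInstance inferInstance inferInstance π hπc hπs hlocsplit
  refine ⟨(MonoidHom.fst A G).comp (H.subtype.comp ρ), ?_, fun g => ?_⟩
  · exact continuous_fst.comp (continuous_subtype_val.comp hρc)
  · have h1 : β ((ρ g : A × G).1) = α ((ρ g : A × G).2) := (ρ g).2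
    have h2 : (ρ g : A × G).2 = g := hρ g
    simpa [h2] using h1
end

section
/- Let G₁ * ⋯ * Gₙ denote the free profinite product and let 1 ≤ i < j ≤ n. Then any conjugate of the canonical image of Gᵢ intersects any conjugate of the canonical image of Gⱼ trivially. (Proof via the canonical homomorphism G₁ * ⋯ * Gₙ → G₁ × ⋯ × Gₙ is not sufficient; one uses that under strong relative projectivity of the free product the images are separated.) -/
/-- `G` together with the embeddings `ε i : Gf i →* G` is the free profinite product of the
profinite groups `Gf i`: every family of continuous homomorphisms into a profinite group
factors uniquely through `G`. -/
def IsFreeProfiniteProduct {n : ℕ} (Gf : Fin n → Type u)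
    [∀ i, Group (Gf i)] [∀ i, TopologicalSpace (Gf i)]
    (G : Type u) [Group G] [TopologicalSpace G] (ε : ∀ i, Gf i →* G) : Prop :=
  (∀ i, Continuous (ε i)) ∧ (∀ i, Function.Injective (ε i)) ∧
  ∀ (H : Type u) (_ : Group H) (_ : TopologicalSpace H) (_ : IsTopologicalGroup H)
    (_ : CompactSpace H) (_ : T2Space H) (_ : TotallyDisconnectedSpace H)
    (γ : ∀ i, Gf i →* H), (∀ i, Continuous (γ i)) →
      ∃! δ : G →* H, Continuous δ ∧ ∀ i, δ.comp (ε i) = γ i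

/-- Cast a monoid hom along an equality of indices. -/
def castMonoidHom {n : ℕ} (Gf : Fin n → Type u) [∀ i, Group (Gf i)]
    {k i : Fin n} (h : k = i) : Gf k →* Gf i := by
  subst h; exact MonoidHom.id _

theorem castMonoidHom_rfl {n : ℕ} (Gf : Fin n → Type u) [∀ i, Group (Gf i)]
    {i : Fin n} (h : i = i) : castMonoidHom Gf h = MonoidHom.id _ := rfl

theorem castMonoidHom_continuous {n : ℕ} (Gf : Fin n → Type u) [∀ i, Group (Gf i)]
    [∀ i, TopologicalSpace (Gf i)] {k i : Fin n} (h : k = i) :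
    Continuous (castMonoidHom Gf h) := by
  subst h; exact continuous_id

theorem stmt4 {n : ℕ} (Gf : Fin n → Type u)
    [∀ i, Group (Gf i)] [∀ i, TopologicalSpace (Gf i)]
    [∀ i, IsTopologicalGroup (Gf i)] [∀ i, CompactSpace (Gf i)] [∀ i, T2Space (Gf i)]
    [∀ i, TotallyDisconnectedSpace (Gf i)]
    (G : Type u) [Group G] [TopologicalSpace G] [IsTopologicalGroup G]
    [CompactSpace G] [T2Space G] [TotallyDisconnectedSpace G]
    (ε : ∀ i, Gf i →* G) (hfree : IsFreeProfiniteProduct Gf G ε)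
    (i j : Fin n) (hij : i ≠ j) (a b x : G)
    (hi : ∃ y : Gf i, x = a * ε i y * a⁻¹)
    (hj : ∃ z : Gf j, x = b * ε j z * b⁻¹) :
    x = 1 := by
  classical
  obtain ⟨hεc, hεinj, huniv⟩ := hfree
  -- the family of maps Gf k →* Gf i : identity on component i, trivial elsewhere
  set γ : ∀ k, Gf k →* Gf i := fun k =>
    if h : k = i then castMonoidHom Gf h else 1 with hγ
  have hγc : ∀ k, Continuous (γ k) := by
    intro k
    by_cases h : k = i
    · simp only [hγ, dif_pos h]
      exact castMonoidHom_continuous Gf h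
    · simp only [hγ, dif_neg h]
      exact continuous_const
  obtain ⟨δ, ⟨hδc, hδε⟩, -⟩ :=
    huniv (Gf i) inferInstance inferInstance inferInstance inferInstance inferInstance
      inferInstance γ hγc
  have hδi : ∀ y : Gf i, δ (ε i y) = y := by
    intro y
    have := DFunLike.congr_fun (hδε i) y
    simpa [hγ, castMonoidHom_rfl] using this
  have hδj : ∀ z : Gf j, δ (ε j z) = 1 := by
    intro z
    have := DFunLike.congr_fun (hδε j) z
    simpa [hγ, dif_neg hij.symm] using this
  obtain ⟨y, hy⟩ := hi
  obtain ⟨z, hz⟩ := hj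
  have h1 : δ x = δ a * y * (δ a)⁻¹ := by
    simp [hy, hδi]
  have h2 : δ x = 1 := by
    simp [hz, hδj]
  have hy1 : y = 1 := by
    have : δ a * y * (δ a)⁻¹ = 1 := h1 ▸ h2
    have : y = (δ a)⁻¹ * 1 * (δ a) := by
      rw [← this]; group
    simpa using this
  rw [hy, hy1, map_one, mul_one, mul_inv_cancel]
end

section
/- Two valuations v and w on a field F are independent (i.e., both non-trivial and F is generated as a ring by the valuation rings O_v and O_w) if and only if for every γ in the value group Γ_v there exists x ∈ F with v(x) > γ and w(x) < 0. -/
/-- Two (multiplicatively written) valuations on a field `F` are independent: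
both are non-trivial and `F` is generated as a ring by their valuation rings. -/
def Valuation.IndependentVal {F : Type*} [Field F]
    {Γ₁ Γ₂ : Type*} [LinearOrderedCommGroupWithZero Γ₁] [LinearOrderedCommGroupWithZero Γ₂]
    (v : Valuation F Γ₁) (w : Valuation F Γ₂) : Prop :=
  (∃ x : F, x ≠ 0 ∧ v x ≠ 1) ∧ (∃ x : F, x ≠ 0 ∧ w x ≠ 1) ∧
    Subring.closure ((v.integer : Set F) ∪ (w.integer : Set F)) = ⊤

/-- From a nontrivial valuation, extract an element of value `< 1`. -/
lemma exists_val_lt_one {F : Type*} [Field F] {Γ : Type*} [LinearOrderedCommGroupWithZero Γ]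
    (v : Valuation F Γ) (x : F) (hx : x ≠ 0) (hvx : v x ≠ 1) :
    ∃ s : F, s ≠ 0 ∧ v s < 1 := by
  rcases lt_or_gt_of_ne hvx with h | h
  · exact ⟨x, hx, h⟩
  · refine ⟨x⁻¹, inv_ne_zero hx, ?_⟩
    rw [map_inv₀]
    exact (inv_lt_one₀ (zero_lt_one.trans h)).2 h

/-- From a nontrivial valuation, extract an element of value `> 1`. -/
lemma exists_one_lt_val {F : Type*} [Field F] {Γ : Type*} [LinearOrderedCommGroupWithZero Γ]
    (v : Valuation F Γ) (x : F) (hx : x ≠ 0) (hvx : v x ≠ 1) :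
    ∃ t : F, t ≠ 0 ∧ 1 < v t := by
  rcases lt_or_gt_of_ne hvx with h | h
  · refine ⟨x⁻¹, inv_ne_zero hx, ?_⟩
    rw [map_inv₀]
    exact (one_lt_inv₀ (zero_lt_iff.2 (v.ne_zero_iff.2 hx))).2 h
  · exact ⟨x, hx, h⟩

/-- Every element of the ring generated by the two valuation rings is `v`-dominated
by an element of the valuation ring of `w`. -/
lemma exists_dominating {F : Type*} [Field F]
    {Γ₁ Γ₂ : Type*} [LinearOrderedCommGroupWithZero Γ₁] [LinearOrderedCommGroupWithZero Γ₂]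
    (v : Valuation F Γ₁) (w : Valuation F Γ₂) {z : F}
    (hz : z ∈ Subring.closure ((v.integer : Set F) ∪ (w.integer : Set F))) :
    ∃ b : F, w b ≤ 1 ∧ v z ≤ v b := by
  induction hz using Subring.closure_induction with
  | mem x hx =>
    rcases hx with hx | hx
    · exact ⟨1, le_of_eq (map_one w), by simpa using (v.mem_integer_iff x).1 hx⟩
    · exact ⟨x, (w.mem_integer_iff x).1 hx, le_rfl⟩
  | zero => exact ⟨1, le_of_eq (map_one w), by simp⟩
  | one => exact ⟨1, le_of_eq (map_one w), le_rfl⟩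
  | add x y hx hy ihx ihy =>
    obtain ⟨b₁, hwb₁, hvb₁⟩ := ihx
    obtain ⟨b₂, hwb₂, hvb₂⟩ := ihy
    rcases le_total (v b₁) (v b₂) with h | h
    · exact ⟨b₂, hwb₂, (v.map_add x y).trans (max_le (hvb₁.trans h) hvb₂)⟩
    · exact ⟨b₁, hwb₁, (v.map_add x y).trans (max_le hvb₁ (hvb₂.trans h))⟩
  | neg x hx ih =>
    obtain ⟨b, hwb, hvb⟩ := ih
    exact ⟨b, hwb, by simpa using hvb⟩
  | mul x y hx hy ihx ihy =>
    obtain ⟨b₁, hwb₁, hvb₁⟩ := ihx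
    obtain ⟨b₂, hwb₂, hvb₂⟩ := ihy
    refine ⟨b₁ * b₂, ?_, ?_⟩
    · rw [map_mul]; exact mul_le_one' hwb₁ hwb₂
    · rw [map_mul, map_mul]; exact mul_le_mul' hvb₁ hvb₂

/-- Independence is equivalent to: for every element `γ = v y` of the value group of `v`
there is `x` with `v x > γ` and `w x < 0` (in additive notation; multiplicatively
`v x < v y` and `w x > 1`). -/
theorem stmt5 {F : Type*} [Field F]
    {Γ₁ Γ₂ : Type*} [LinearOrderedCommGroupWithZero Γ₁] [LinearOrderedCommGroupWithZero Γ₂]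
    (v : Valuation F Γ₁) (w : Valuation F Γ₂) :
    v.IndependentVal w ↔ ∀ y : F, y ≠ 0 → ∃ x : F, v x < v y ∧ 1 < w x := by
  constructor
  · rintro ⟨⟨a, ha0, hva⟩, ⟨c, hc0, hwc⟩, hcl⟩ y hy
    -- t : 1 < w t
    obtain ⟨t, ht0, hwt⟩ := exists_one_lt_val w c hc0 hwc
    -- s₀ : v s₀ < 1
    obtain ⟨s₀, hs₀0, hvs₀⟩ := exists_val_lt_one v a ha0 hva
    -- choose s with s ≠ 0, v s < 1, v s * v t < 1
    obtain ⟨s, hs0, hvs, hvst⟩ : ∃ s : F, s ≠ 0 ∧ v s < 1 ∧ v s * v t < 1 := by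
      rcases le_or_gt (v t) 1 with h | h
      · exact ⟨s₀, hs₀0, hvs₀, mul_lt_one_of_lt_of_le hvs₀ h⟩
      · refine ⟨s₀ * s₀ * t⁻¹, by simp [hs₀0, ht0], ?_, ?_⟩
        · rw [map_mul, map_mul, map_inv₀]
          have h1 : v s₀ * v s₀ < 1 := mul_lt_one' hvs₀ hvs₀
          have h2 : (v t)⁻¹ < 1 := (inv_lt_one₀ (zero_lt_one.trans h)).2 h
          exact mul_lt_one' h1 h2
        · rw [map_mul, map_mul, map_inv₀, mul_assoc, inv_mul_cancel₀ (v.ne_zero_iff.2 ht0),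
            mul_one]
          exact mul_lt_one' hvs₀ hvs₀
    -- z = (y * s)⁻¹ lies in the closure, dominate it
    have hzmem : (y * s)⁻¹ ∈ Subring.closure ((v.integer : Set F) ∪ (w.integer : Set F)) := by
      rw [hcl]; trivial
    obtain ⟨b, hwb, hvb⟩ := exists_dominating v w hzmem
    have hys0 : (y * s : F) ≠ 0 := mul_ne_zero hy hs0
    have hvz : v (y * s)⁻¹ ≠ 0 := by
      rw [map_inv₀]
      exact inv_ne_zero (v.ne_zero_iff.2 hys0)
    have hb0 : b ≠ 0 := by
      intro h
      rw [h, map_zero] at hvb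
      exact hvz (le_antisymm hvb zero_le')
    refine ⟨b⁻¹ * t, ?_, ?_⟩
    · -- v (b⁻¹ * t) ≤ v (y*s) * v t = v y * (v s * v t) < v y
      have hvb' : v b⁻¹ ≤ v (y * s) := by
        rw [map_inv₀]
        rw [map_inv₀] at hvb
        have hpos : (0:Γ₁) < (v (y * s))⁻¹ :=
          zero_lt_iff.2 (inv_ne_zero (v.ne_zero_iff.2 hys0))
        calc (v b)⁻¹ ≤ ((v (y*s))⁻¹)⁻¹ := inv_anti₀ hpos hvb
          _ = v (y * s) := inv_inv _
      calc v (b⁻¹ * t) = v b⁻¹ * v t := map_mul v _ _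
        _ ≤ v (y * s) * v t := mul_le_mul_left hvb' _
        _ = v y * (v s * v t) := by rw [map_mul, mul_assoc]
        _ < v y := mul_lt_of_lt_one_right (zero_lt_iff.2 (v.ne_zero_iff.2 hy)) hvst
    · -- w (b⁻¹ * t) ≥ w t > 1
      have hwb' : 1 ≤ w b⁻¹ := by
        rw [map_inv₀]
        exact (one_le_inv₀ (zero_lt_iff.2 (w.ne_zero_iff.2 hb0))).2 hwb
      calc (1 : Γ₂) < w t := hwt
        _ = 1 * w t := (one_mul _).symm
        _ ≤ w b⁻¹ * w t := mul_le_mul_left hwb' _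
        _ = w (b⁻¹ * t) := (map_mul w _ _).symm
  · intro h
    obtain ⟨x₁, hx₁, hwx₁⟩ := h 1 one_ne_zero
    rw [map_one] at hx₁
    have hx₁0 : x₁ ≠ 0 := by
      intro h0
      rw [h0, map_zero] at hwx₁
      exact absurd hwx₁ (not_lt_of_gt zero_lt_one)
    refine ⟨⟨x₁, hx₁0, ne_of_lt hx₁⟩, ⟨x₁, hx₁0, ne_of_gt hwx₁⟩, ?_⟩
    rw [eq_top_iff]
    rintro a -
    rcases eq_or_ne a 0 with rfl | ha
    · exact Subring.zero_mem _
    obtain ⟨x, hvx, hwx⟩ := h a⁻¹ (inv_ne_zero ha)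
    have hx0 : x ≠ 0 := by
      intro h0
      rw [h0, map_zero] at hwx
      exact absurd hwx (not_lt_of_gt zero_lt_one)
    have h1 : x * a ∈ v.integer := by
      rw [Valuation.mem_integer_iff, map_mul]
      have : v x * v a ≤ v a⁻¹ * v a := mul_le_mul_left hvx.le (v a)
      rw [map_inv₀, inv_mul_cancel₀ (v.ne_zero_iff.2 ha)] at this
      exact this
    have h2 : x⁻¹ ∈ w.integer := by
      rw [Valuation.mem_integer_iff, map_inv₀]
      exact le_of_lt ((inv_lt_one₀ (zero_lt_one.trans hwx)).2 hwx)
    have : a = (x * a) * x⁻¹ := by field_simp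
    rw [this]
    exact Subring.mul_mem _
      (Subring.subset_closure (Set.mem_union_left _ h1))
      (Subring.subset_closure (Set.mem_union_right _ h2))
end

section
/- Let v₁, …, vₙ be pairwise independent valuations on a field F, and let (F', v'₁, …, v'ₙ) be an extension of n-fold valued fields such that for each i the value group Γ_{vᵢ} is cofinal in Γ_{v'ᵢ} (for every γ ∈ Γ_{v'ᵢ} there is δ ∈ Γ_{vᵢ} with δ ≥ γ). Then v'₁, …, v'ₙ are pairwise independent on F'. -/
lemma approx_of_closure {F : Type*} [Field F]
    {Γ₁ Γ₂ : Type*} [LinearOrderedCommGroupWithZero Γ₁] [LinearOrderedCommGroupWithZero Γ₂]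
    (v : Valuation F Γ₁) (w : Valuation F Γ₂)
    (h : Subring.closure ((v.integer : Set F) ∪ (w.integer : Set F)) = ⊤)
    (y : F) (hy : y ≠ 0) : ∃ t : F, t ≠ 0 ∧ v t ≤ v y ∧ 1 ≤ w t := by
  have key : ∀ z : F, z ∈ Subring.closure ((v.integer : Set F) ∪ (w.integer : Set F)) →
      z = 0 ∨ ∃ b : F, b ≠ 0 ∧ w b ≤ 1 ∧ v z ≤ v b := by
    intro z hz
    induction hz using Subring.closure_induction with
    | mem x hx =>
      rcases eq_or_ne x 0 with rfl | hx0
      · exact Or.inl rfl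
      rcases hx with hx | hx
      · exact Or.inr ⟨1, one_ne_zero, by simp, by simpa using (Valuation.mem_integer_iff v x).1 hx⟩
      · exact Or.inr ⟨x, hx0, hx, le_refl _⟩
    | zero => exact Or.inl rfl
    | one => exact Or.inr ⟨1, one_ne_zero, by simp, by simp⟩
    | add x z hx hz ihx ihz =>
      rcases ihx with rfl | ⟨b, hb0, hwb, hvb⟩
      · simpa using ihz
      rcases ihz with rfl | ⟨c, hc0, hwc, hvc⟩
      · exact Or.inr ⟨b, hb0, hwb, by simpa using hvb⟩
      refine Or.inr ?_
      rcases le_total (v b) (v c) with hbc | hbc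
      · exact ⟨c, hc0, hwc, v.map_add_le (hvb.trans hbc) hvc⟩
      · exact ⟨b, hb0, hwb, v.map_add_le hvb (hvc.trans hbc)⟩
    | neg x hx ih =>
      rcases ih with rfl | ⟨b, hb0, hwb, hvb⟩
      · exact Or.inl (by simp)
      · exact Or.inr ⟨b, hb0, hwb, by simpa using hvb⟩
    | mul x z hx hz ihx ihz =>
      rcases ihx with rfl | ⟨b, hb0, hwb, hvb⟩
      · exact Or.inl (by simp)
      rcases ihz with rfl | ⟨c, hc0, hwc, hvc⟩
      · exact Or.inl (by simp)
      refine Or.inr ⟨b * c, mul_ne_zero hb0 hc0, ?_, ?_⟩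
      · rw [map_mul]; exact mul_le_one' hwb hwc
      · rw [map_mul, map_mul]; exact mul_le_mul' hvb hvc
  have hyi : (y⁻¹ : F) ∈ Subring.closure ((v.integer : Set F) ∪ (w.integer : Set F)) := by
    rw [h]; trivial
  rcases key _ hyi with h0 | ⟨b, hb0, hwb, hvb⟩
  · exact absurd h0 (inv_ne_zero hy)
  refine ⟨b⁻¹, inv_ne_zero hb0, ?_, ?_⟩
  · rw [map_inv₀]
    rw [map_inv₀] at hvb
    have hy' : (0 : Γ₁) < (v y)⁻¹ := by
      rw [zero_lt_iff]; exact inv_ne_zero (v.ne_zero_iff.2 hy)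
    have := inv_anti₀ hy' hvb
    rwa [inv_inv] at this
  · rw [map_inv₀]
    have hb : (0 : Γ₂) < w b := zero_lt_iff.2 (w.ne_zero_iff.2 hb0)
    exact (one_le_inv₀ hb).2 hwb

theorem stmt6 {F F' : Type*} [Field F] [Field F'] [Algebra F F'] {n : ℕ}
    {Γ : Fin n → Type*} [∀ i, LinearOrderedCommGroupWithZero (Γ i)]
    (v' : ∀ i, Valuation F' (Γ i))
    -- the restrictions to `F`:
    (v : ∀ i, Valuation F (Γ i)) (hres : ∀ i, v i = (v' i).comap (algebraMap F F'))
    -- pairwise independence of the restrictions: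
    (hindep : ∀ i j, i ≠ j → (v i).IndependentVal (v j))
    -- each value group `Γ_{v i}` is cofinal in `Γ_{v' i}` (additively `δ ≥ γ`;
    -- multiplicatively `v' (algebraMap y) ≤ v' x`):
    (hcof : ∀ i, ∀ x : F', x ≠ 0 → ∃ y : F, y ≠ 0 ∧
      v' i (algebraMap F F' y) ≤ v' i x) :
    ∀ i j, i ≠ j → (v' i).IndependentVal (v' j) := by
  have halg : Function.Injective (algebraMap F F') := (algebraMap F F').injective
  have hval : ∀ i (x : F), v' i (algebraMap F F' x) = v i x := by
    intro i x; rw [hres i]; rfl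
  intro i j hij
  obtain ⟨⟨x, hx0, hx1⟩, ⟨x2, hx20, hx21⟩, hcl⟩ := hindep i j hij
  refine ⟨⟨algebraMap F F' x, ?_, ?_⟩, ⟨algebraMap F F' x2, ?_, ?_⟩, ?_⟩
  · simpa using fun h => hx0 (halg (by simpa using h))
  · rw [hval]; exact hx1
  · simpa using fun h => hx20 (halg (by simpa using h))
  · rw [hval]; exact hx21
  · rw [eq_top_iff]
    rintro z -
    rcases eq_or_ne z 0 with rfl | hz
    · exact zero_mem _
    obtain ⟨y, hy0, hyle⟩ := hcof i z⁻¹ (inv_ne_zero hz)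
    obtain ⟨t, ht0, htv, htw⟩ := approx_of_closure (v i) (v j) hcl y hy0
    have ht0' : algebraMap F F' t ≠ 0 := fun h => ht0 (halg (by simpa using h))
    have hzeq : z = (algebraMap F F' t * z) * (algebraMap F F' t)⁻¹ := by
      field_simp
    rw [hzeq]
    refine Subring.mul_mem _ (Subring.subset_closure (Or.inl ?_)) (Subring.subset_closure (Or.inr ?_))
    · show v' i _ ≤ 1
      rw [map_mul, hval]
      calc v i t * v' i z ≤ v' i (algebraMap F F' y) * v' i z := by
            rw [hval]; exact mul_le_mul_left htv _
        _ ≤ v' i z⁻¹ * v' i z := mul_le_mul_left hyle _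
        _ = 1 := by rw [← map_mul, inv_mul_cancel₀ hz, map_one]
    · show v' j _ ≤ 1
      rw [← map_inv₀ (algebraMap F F'), hval, map_inv₀]
      have : (0 : Γ j) < v j t := zero_lt_iff.2 ((v j).ne_zero_iff.2 ht0)
      exact (inv_le_one₀ this).2 htw
end

section
/- Let L/K be a finite Galois extension with group B = Gal(L/K), let β : A → B be an epimorphism of finite groups, regard the elements of A as indeterminates over L, and let A act on the rational function field L(A) via group multiplication on the set A of indeterminates and via the Galois action of β(A) = B on L. If D ≤ A is a subgroup with D ∩ ker β = {1}, then the fixed field L(A)^D is a purely transcendental extension of L^{β(D)}. -/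
open Module

section Helpers

/-- finrank transfer along subfield equality -/
lemma finrank_subfield_congr {Ω : Type*} [Field Ω] {P Q : Subfield Ω} (h : P = Q) :
    finrank ↥P Ω = finrank ↥Q Ω := by subst h; rfl

lemma finiteDimensional_subfield_congr {Ω : Type*} [Field Ω] {P Q : Subfield Ω} (h : P = Q)
    [FiniteDimensional ↥P Ω] : FiniteDimensional ↥Q Ω := by subst h; infer_instance

/-- Dedekind: the matrix `(σ d (b e))` is nonsingular. -/
lemma dedekind_det_ne_zero {F L : Type*} [Field F] [Field L] [Algebra F L]
    {G : Type*} [Fintype G] [DecidableEq G] (σ : G → (L ≃ₐ[F] L)) (hσ : Function.Injective σ)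
    (b : Basis G F L) :
    (Matrix.of fun d e : G => σ d (b e)).det ≠ 0 := by
  rw [Ne, ← Matrix.exists_vecMul_eq_zero_iff]
  rintro ⟨v, hv, hvM⟩
  apply hv
  have hinj : Function.Injective (fun d : G => ((σ d : L ≃ₐ[F] L) : L →* L)) := by
    intro d e h
    exact hσ (AlgEquiv.ext fun x => DFunLike.congr_fun h x)
  have hli : LinearIndependent L (fun d : G => ((σ d : L →* L) : L → L)) :=
    (linearIndependent_monoidHom L L).comp _ hinj
  have hz : (∑ d, v d • (fun x => σ d x)) = (0 : L → L) := by
    funext x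
    have hx : x = ∑ e, (b.repr x e) • b e := (b.sum_repr x).symm
    simp only [Finset.sum_apply, Pi.smul_apply, smul_eq_mul, Pi.zero_apply]
    conv_lhs => rw [hx]
    have : ∀ d : G, σ d (∑ e, (b.repr x e) • b e) = ∑ e, b.repr x e • σ d (b e) := by
      intro d
      rw [map_sum]
      exact Finset.sum_congr rfl fun e _ => (σ d).toLinearMap.map_smul _ _
    simp_rw [this, Finset.mul_sum]
    rw [Finset.sum_comm]
    refine Finset.sum_eq_zero fun e _ => ?_
    have := congrFun hvM e
    simp only [Matrix.vecMul, dotProduct, Matrix.of_apply, Pi.zero_apply] at this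
    calc ∑ d, v d * b.repr x e • σ d (b e)
        = b.repr x e • ∑ d, v d * σ d (b e) := by
          rw [Finset.smul_sum]
          exact Finset.sum_congr rfl fun d _ => (mul_smul_comm _ _ _)
      _ = 0 := by rw [this, smul_zero]
  funext d
  exact Fintype.linearIndependent_iff.mp hli v hz d
section
variable {A : Type} [Group A] (D : Subgroup A)
lemma rep_mem (a : A) :
    a * (Quotient.out (⟦a⟧ : Quotient (MulAction.orbitRel ↥D A)))⁻¹ ∈ D := by
  have h : (Quotient.out (⟦a⟧ : Quotient (MulAction.orbitRel ↥D A))) ∈ MulAction.orbit ↥D a :=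
    MulAction.orbitRel_apply.mp (Quotient.mk_out a)
  obtain ⟨d, hd⟩ := h
  have : a * (Quotient.out (⟦a⟧ : Quotient (MulAction.orbitRel ↥D A)))⁻¹ = ↑(d⁻¹) := by
    rw [← hd]; show a * (↑d * a)⁻¹ = _; rw [mul_inv_rev]; simp
  rw [this]; exact (d⁻¹).2

lemma class_eq (d : ↥D) (q : Quotient (MulAction.orbitRel ↥D A)) :
    (⟦(d : A) * Quotient.out q⟧ : Quotient (MulAction.orbitRel ↥D A)) = q := by
  conv_rhs => rw [← Quotient.out_eq q]
  exact Quotient.sound (MulAction.orbitRel_apply.mpr ⟨d, rfl⟩)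
end
end Helpers

/-- The fixed subfield of a subgroup `D` of a group `G` acting on a field `F` by ring
automorphisms. -/
def fixedSubfield (G : Type*) [Group G] (F : Type*) [Field F] [MulSemiringAction G F]
    (D : Subgroup G) : Subfield F where
  carrier := {x | ∀ σ ∈ D, σ • x = x}
  mul_mem' := by intro a b ha hb σ hσ; rw [smul_mul', ha σ hσ, hb σ hσ]
  one_mem' := by intro σ hσ; rw [smul_one]
  add_mem' := by intro a b ha hb σ hσ; rw [smul_add, ha σ hσ, hb σ hσ]
  neg_mem' := by intro a ha σ hσ; rw [smul_neg, ha σ hσ]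
  zero_mem' := by intro σ hσ; rw [smul_zero]
  inv_mem' := by intro a ha σ hσ; rw [smul_inv'', ha σ hσ]

set_option synthInstance.maxHeartbeats 1000000 in
set_option maxHeartbeats 1000000 in
theorem stmt12 {K L : Type} [Field K] [Field L] [Algebra K L]
    [FiniteDimensional K L] [IsGalois K L]
    (A : Type) [Group A] [Finite A]
    -- `β : A ↠ B = Gal(L/K)`:
    (β : A →* (L ≃ₐ[K] L)) (hβ : Function.Surjective β)
    (D : Subgroup A) (hD : D ⊓ β.ker = ⊥)
    -- `Ω = L(A)`, the rational function field over `L` in indeterminates indexed by `A`: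
    (Ω : Type) [Field Ω] [Algebra (MvPolynomial A L) Ω] [IsFractionRing (MvPolynomial A L) Ω]
    -- with the `A`-action permuting the indeterminates by left multiplication and acting
    -- on coefficients through `β`:
    [MulSemiringAction A Ω]
    (hX : ∀ σ a : A,
      σ • (algebraMap (MvPolynomial A L) Ω (MvPolynomial.X a)) =
        algebraMap (MvPolynomial A L) Ω (MvPolynomial.X (σ * a)))
    (hC : ∀ σ : A, ∀ c : L,
      σ • (algebraMap (MvPolynomial A L) Ω (MvPolynomial.C c)) =
        algebraMap (MvPolynomial A L) Ω (MvPolynomial.C (β σ c))) :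
    -- then `L(A)^D` is purely transcendental over (the image in `Ω` of) `L^{β(D)}`:
    ∃ S : Set Ω,
      AlgebraicIndependent
        ↥((fixedSubfield (L ≃ₐ[K] L) L (D.map β)).map
          ((algebraMap (MvPolynomial A L) Ω).comp (MvPolynomial.C)))
        (fun s : S => (s : Ω)) ∧
      ∀ x : Ω,
        (∀ σ ∈ D, σ • x = x) ↔
          x ∈ IntermediateField.adjoin
            ↥((fixedSubfield (L ≃ₐ[K] L) L (D.map β)).map
              ((algebraMap (MvPolynomial A L) Ω).comp (MvPolynomial.C))) S := by
  classical
  cases nonempty_fintype A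
  haveI : Fintype ↥D := Fintype.ofFinite _
  set φ : MvPolynomial A L →+* Ω := (algebraMap (MvPolynomial A L) Ω) with hφdef
  set ι : L →+* Ω := ((algebraMap (MvPolynomial A L) Ω).comp (MvPolynomial.C)) with hιdef
  set xv : A → Ω := fun a => φ (MvPolynomial.X a) with hxvdef
  set D' : Subgroup (L ≃ₐ[K] L) := D.map β with hD'def
  set K's : Subfield L := fixedSubfield (L ≃ₐ[K] L) L D' with hK'sdef
  set K'' : Subfield Ω := K's.map ι with hK''def
  haveI : Fintype ↥D' := Fintype.ofFinite _
  have hφinj : Function.Injective φ := IsFractionRing.injective _ _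
  have hιinj : Function.Injective ι := fun a b h => MvPolynomial.C_injective _ _ (hφinj h)
  have hβD : ∀ d : A, d ∈ D → β d = 1 → d = 1 := fun d hd h1 => by
    have hmem : d ∈ D ⊓ β.ker := ⟨hd, h1⟩
    rwa [hD, Subgroup.mem_bot] at hmem
  have hmem : ∀ d : ↥D, β ↑d ∈ D' := fun d => Subgroup.mem_map_of_mem β d.2
  have hβDinj : ∀ d₁ d₂ : ↥D, β ↑d₁ = β ↑d₂ → d₁ = d₂ := by
    intro d₁ d₂ h
    have h2 : β (↑d₁ * (↑d₂)⁻¹ : A) = 1 := by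
      rw [map_mul, map_inv, h, mul_inv_cancel]
    have h3 := hβD _ (D.mul_mem d₁.2 (D.inv_mem d₂.2)) h2
    exact Subtype.ext (by rwa [mul_inv_eq_one] at h3)
  let ψ : ↥D → ↥D' := fun d => ⟨β ↑d, hmem d⟩
  have hψbij : Function.Bijective ψ := by
    constructor
    · intro d₁ d₂ h
      exact hβDinj _ _ (congrArg Subtype.val h)
    · rintro ⟨σ, d, hd, rfl⟩
      exact ⟨⟨d, hd⟩, rfl⟩
  have hcard : Fintype.card ↥D' = Fintype.card ↥D := (Fintype.card_of_bijective hψbij).symm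
  -- the fixed field K' = L^{β(D)} inside L
  have hKs_eq : K's = FixedPoints.subfield ↥D' L := by
    ext x
    exact ⟨fun h σ => h ↑σ σ.2, fun h σ hσ => h ⟨σ, hσ⟩⟩
  haveI : FaithfulSMul ↥D' L := ⟨fun {σ τ} h => Subtype.ext (AlgEquiv.ext fun x => h x)⟩
  haveI : FiniteDimensional ↥K's L := finiteDimensional_subfield_congr hKs_eq.symm
  have hLrank : finrank ↥K's L = Fintype.card ↥D := by
    rw [finrank_subfield_congr hKs_eq, FixedPoints.finrank_eq_card ↥D' L, hcard]
  -- a basis of L over K' indexed by D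
  let e0 : Fin (finrank ↥K's L) ≃ ↥D := Fintype.equivOfCardEq (by rw [Fintype.card_fin, hLrank])
  let bD : Basis ↥D ↥K's L := (Module.finBasis ↥K's L).reindex e0
  -- the Dedekind matrix and its inverse
  have hfixKs : ∀ (σ : L ≃ₐ[K] L), σ ∈ D' → ∀ c : ↥K's, σ ↑c = ↑c := fun σ hσ c => c.2 σ hσ
  let σ' : ↥D → (L ≃ₐ[↥K's] L) := fun d =>
    AlgEquiv.ofRingEquiv (f := (β ↑d).toRingEquiv) (fun c => hfixKs _ (hmem d) c)
  have hσ'app : ∀ (d : ↥D) (x : L), σ' d x = β ↑d x := fun d x => rfl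
  have hσ'inj : Function.Injective σ' := by
    intro d₁ d₂ h
    exact hβDinj _ _ (AlgEquiv.ext fun x => by
      rw [← hσ'app d₁ x, ← hσ'app d₂ x, h])
  let M : Matrix ↥D ↥D L := Matrix.of fun d e => β ↑d (bD e)
  have hdet : M.det ≠ 0 := dedekind_det_ne_zero σ' hσ'inj bD
  let N : Matrix ↥D ↥D L := M⁻¹
  have hMN : M * N = 1 := Matrix.mul_nonsing_inv M (isUnit_iff_ne_zero.mpr hdet)
  have hNM : N * M = 1 := Matrix.nonsing_inv_mul M (isUnit_iff_ne_zero.mpr hdet)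
  -- orbit representatives
  let Qt := Quotient (MulAction.orbitRel ↥D A)
  let rep : Qt → A := Quotient.out
  have hrepD : ∀ a : A, a * (rep ⟦a⟧)⁻¹ ∈ D := rep_mem D
  let eD : A → ↥D := fun a => ⟨a * (rep ⟦a⟧)⁻¹, hrepD a⟩
  have heq1 : ∀ a : A, ↑(eD a) * rep ⟦a⟧ = a := fun a => by
    show a * (rep ⟦a⟧)⁻¹ * rep ⟦a⟧ = a
    group
  have heq2 : ∀ (d : ↥D) (q : Qt), (⟦↑d * rep q⟧ : Qt) = q := class_eq D
  have heq3 : ∀ (d : ↥D) (q : Qt), eD (↑d * rep q) = d := by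
    intro d q
    apply Subtype.ext
    show (↑d * rep q) * (rep ⟦↑d * rep q⟧)⁻¹ = ↑d
    rw [heq2]
    group
  -- the fixed generators y
  let y : ↥D × Qt → Ω := fun p => ∑ d : ↥D, ι (M d p.1) * xv (↑d * rep p.2)
  -- polynomial substitutions
  let fP : A → MvPolynomial A L := fun a =>
    ∑ d : ↥D, MvPolynomial.C (M d (eD a)) * MvPolynomial.X (↑d * rep ⟦a⟧)
  let fP' : A → MvPolynomial A L := fun a =>
    ∑ d : ↥D, MvPolynomial.C (N d (eD a)) * MvPolynomial.X (↑d * rep ⟦a⟧)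
  have hfPeq : ∀ (e : ↥D) (q : Qt), fP (↑e * rep q) =
      ∑ d : ↥D, MvPolynomial.C (M d e) * MvPolynomial.X (↑d * rep q) := by
    intro e q
    show ∑ d : ↥D, MvPolynomial.C (M d (eD (↑e * rep q))) *
        MvPolynomial.X (↑d * rep ⟦↑e * rep q⟧) = _
    rw [heq2, heq3]
  have hfP'eq : ∀ (e : ↥D) (q : Qt), fP' (↑e * rep q) =
      ∑ d : ↥D, MvPolynomial.C (N d e) * MvPolynomial.X (↑d * rep q) := by
    intro e q
    show ∑ d : ↥D, MvPolynomial.C (N d (eD (↑e * rep q))) *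
        MvPolynomial.X (↑d * rep ⟦↑e * rep q⟧) = _
    rw [heq2, heq3]
  have hkey : ∀ a, MvPolynomial.aeval fP' (fP a) = MvPolynomial.X a := by
    intro a
    show MvPolynomial.aeval fP' (∑ d : ↥D, MvPolynomial.C (M d (eD a)) *
        MvPolynomial.X (↑d * rep ⟦a⟧)) = _
    rw [map_sum]
    have hterm : ∀ d : ↥D, MvPolynomial.aeval fP' (MvPolynomial.C (M d (eD a)) *
        MvPolynomial.X (↑d * rep ⟦a⟧)) =
        ∑ d' : ↥D, MvPolynomial.C (N d' d * M d (eD a)) * MvPolynomial.X (↑d' * rep ⟦a⟧) := by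
      intro d
      rw [map_mul, MvPolynomial.aeval_C, MvPolynomial.aeval_X, MvPolynomial.algebraMap_eq,
        hfP'eq d ⟦a⟧, Finset.mul_sum]
      refine Finset.sum_congr rfl fun d' _ => ?_
      rw [← mul_assoc, ← MvPolynomial.C_mul, mul_comm (M d (eD a))]
    rw [Finset.sum_congr rfl fun d _ => hterm d, Finset.sum_comm]
    have hrow : ∀ d' : ↥D, ∑ d : ↥D, MvPolynomial.C (N d' d * M d (eD a)) *
        MvPolynomial.X (↑d' * rep ⟦a⟧) =
        MvPolynomial.C ((N * M) d' (eD a)) * MvPolynomial.X (↑d' * rep ⟦a⟧) := by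
      intro d'
      rw [Matrix.mul_apply, map_sum, Finset.sum_mul]
    rw [Finset.sum_congr rfl fun d' _ => hrow d', hNM]
    rw [Finset.sum_eq_single (eD a)
      (fun d' _ hne => by rw [Matrix.one_apply_ne hne, map_zero, zero_mul])
      (fun h => absurd (Finset.mem_univ _) h)]
    rw [Matrix.one_apply_eq, map_one, one_mul, heq1]
  -- the lifted endomorphism of Ω
  let Ψ : MvPolynomial A L →ₐ[L] MvPolynomial A L := MvPolynomial.aeval fP
  have hcomp : (MvPolynomial.aeval fP').comp Ψ = AlgHom.id L (MvPolynomial A L) := by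
    apply MvPolynomial.algHom_ext
    intro a
    simp only [AlgHom.comp_apply, AlgHom.id_apply]
    show MvPolynomial.aeval fP' (MvPolynomial.aeval fP (MvPolynomial.X a)) = _
    rw [MvPolynomial.aeval_X]
    exact hkey a
  have hΨinj : Function.Injective Ψ := by
    intro p q h
    have h2 := congrArg (MvPolynomial.aeval fP') h
    have hp := DFunLike.congr_fun hcomp p
    have hq := DFunLike.congr_fun hcomp q
    simp only [AlgHom.comp_apply, AlgHom.id_apply] at hp hq
    rwa [hp, hq] at h2
  have hφΨinj : Function.Injective (φ.comp Ψ.toRingHom) := by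
    exact hφinj.comp hΨinj
  let Φ : Ω →+* Ω := IsFractionRing.lift (g := φ.comp Ψ.toRingHom) hφΨinj
  have hΦφ : ∀ p, Φ (φ p) = φ (Ψ p) := fun p => IsFractionRing.lift_algebraMap _ _
  have hΦι : ∀ c : L, Φ (ι c) = ι c := by
    intro c
    show Φ (φ (MvPolynomial.C c)) = φ (MvPolynomial.C c)
    rw [hΦφ]
    congr 1
    show MvPolynomial.aeval fP (MvPolynomial.C c) = _
    rw [MvPolynomial.aeval_C, MvPolynomial.algebraMap_eq]
  have hΦx : ∀ a, Φ (xv a) = φ (fP a) := by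
    intro a
    show Φ (φ (MvPolynomial.X a)) = _
    rw [hΦφ]
    congr 1
    show MvPolynomial.aeval fP (MvPolynomial.X a) = _
    rw [MvPolynomial.aeval_X]
  have hy : ∀ (e : ↥D) (q : Qt), Φ (xv (↑e * rep q)) = y (e, q) := by
    intro e q
    rw [hΦx, hfPeq e q, map_sum]
    refine Finset.sum_congr rfl fun d _ => ?_
    rw [map_mul]
    rfl
  -- K'' is isomorphic to K's via ι
  have hK''memc : ∀ c : ↥K's, ι ↑c ∈ K'' := fun c => ⟨↑c, c.2, rfl⟩
  let ιKrh : ↥K's →+* ↥K'' :=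
    { toFun := fun c => ⟨ι ↑c, hK''memc c⟩
      map_one' := Subtype.ext (by show ι 1 = 1; rw [map_one])
      map_mul' := fun c₁ c₂ => Subtype.ext (by
        show ι ↑(c₁ * c₂) = ι ↑c₁ * ι ↑c₂
        push_cast
        rw [map_mul])
      map_zero' := Subtype.ext (by show ι 0 = 0; rw [map_zero])
      map_add' := fun c₁ c₂ => Subtype.ext (by
        show ι ↑(c₁ + c₂) = ι ↑c₁ + ι ↑c₂
        push_cast
        rw [map_add]) }
  have hιKbij : Function.Bijective ιKrh := by
    constructor
    · intro c₁ c₂ h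
      exact Subtype.ext (hιinj (congrArg Subtype.val h))
    · rintro ⟨_, c, hc, rfl⟩
      exact ⟨⟨c, hc⟩, rfl⟩
  let eK : ↥K's ≃+* ↥K'' := RingEquiv.ofBijective ιKrh hιKbij
  let j : ↥K'' →+* L := (K's.subtype).comp (eK.symm : ↥K'' →+* ↥K's)
  have hj : ∀ k : ↥K'', ι (j k) = ↑k := by
    intro k
    have h1 : ιKrh (eK.symm k) = k := eK.apply_symm_apply k
    exact congrArg Subtype.val h1
  have hjinj : Function.Injective j := by
    intro k₁ k₂ h
    have : ι (j k₁) = ι (j k₂) := congrArg ι h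
    rw [hj k₁, hj k₂] at this
    exact Subtype.ext this
  -- xv is algebraically independent over K''
  have haeK : AlgebraicIndependent ↥K'' xv := by
    rw [algebraicIndependent_iff_injective_aeval]
    have hfac : ((MvPolynomial.aeval (R := ↥K'') xv : MvPolynomial A ↥K'' →ₐ[↥K''] Ω) :
        MvPolynomial A ↥K'' →+* Ω) = φ.comp (MvPolynomial.map j) := by
      apply MvPolynomial.ringHom_ext
      · intro k
        show MvPolynomial.aeval (R := ↥K'') xv (MvPolynomial.C k) =
          φ (MvPolynomial.map j (MvPolynomial.C k))
        rw [MvPolynomial.aeval_C, MvPolynomial.map_C]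
        show algebraMap ↥K'' Ω k = ι (j k)
        rw [hj k]
        rfl
      · intro a
        show MvPolynomial.aeval (R := ↥K'') xv (MvPolynomial.X a) =
          φ (MvPolynomial.map j (MvPolynomial.X a))
        rw [MvPolynomial.aeval_X, MvPolynomial.map_X]
    show Function.Injective (MvPolynomial.aeval (R := ↥K'') xv)
    have : ⇑(MvPolynomial.aeval (R := ↥K'') xv) = ⇑(φ.comp (MvPolynomial.map j)) := by
      rw [← hfac]; rfl
    rw [this]
    exact hφinj.comp (MvPolynomial.map_injective j hjinj)
  -- transport along Φ and reindex
  have hΦcomm : ∀ k : ↥K'', Φ (algebraMap ↥K'' Ω k) = algebraMap ↥K'' Ω k := by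
    intro k
    have h1 : algebraMap ↥K'' Ω k = ι (j k) := by rw [hj k]; rfl
    rw [h1, hΦι]
  let Φalg : Ω →ₐ[↥K''] Ω := { toRingHom := Φ, commutes' := hΦcomm }
  have hΦinj : Function.Injective Φalg := Φ.injective
  have hind2 : AlgebraicIndependent ↥K'' (⇑Φalg ∘ xv) := haeK.map' hΦinj
  let g : ↥D × Qt → A := fun p => ↑p.1 * rep p.2
  have hginj : Function.Injective g := by
    rintro ⟨e₁, q₁⟩ ⟨e₂, q₂⟩ h
    have h' : (↑e₁ : A) * rep q₁ = ↑e₂ * rep q₂ := h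
    have hq : q₁ = q₂ := by rw [← heq2 e₁ q₁, ← heq2 e₂ q₂, h']
    subst hq
    have he : (↑e₁ : A) = ↑e₂ := mul_right_cancel h'
    exact Prod.ext (Subtype.ext he) rfl
  have hycomp : (⇑Φalg ∘ xv) ∘ g = y := funext fun p => hy p.1 p.2
  have hindy : AlgebraicIndependent ↥K'' y := hycomp ▸ hind2.comp g hginj
  -- x's lie in the span of the y's with coefficients from ι(L)
  have hxspan : ∀ a : A, xv a = ∑ dd : ↥D, ι (N dd (eD a)) * y (dd, ⟦a⟧) := by
    intro a
    have h1 : ∀ dd : ↥D, ι (N dd (eD a)) * y (dd, ⟦a⟧)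
        = ∑ d : ↥D, ι (M d dd * N dd (eD a)) * xv (↑d * rep ⟦a⟧) := by
      intro dd
      show ι (N dd (eD a)) * (∑ d : ↥D, ι (M d dd) * xv (↑d * rep ⟦a⟧)) = _
      rw [Finset.mul_sum]
      refine Finset.sum_congr rfl fun d _ => ?_
      rw [map_mul, ← mul_assoc, mul_comm (ι (N dd (eD a)))]
    rw [Finset.sum_congr rfl fun dd _ => h1 dd, Finset.sum_comm]
    have h2 : ∀ d : ↥D, ∑ dd : ↥D, ι (M d dd * N dd (eD a)) * xv (↑d * rep ⟦a⟧)
        = ι ((M * N) d (eD a)) * xv (↑d * rep ⟦a⟧) := by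
      intro d
      rw [Matrix.mul_apply, map_sum, Finset.sum_mul]
    rw [Finset.sum_congr rfl fun d _ => h2 d, hMN]
    rw [Finset.sum_eq_single (eD a)
      (fun d _ hne => by rw [Matrix.one_apply_ne hne, map_zero, zero_mul])
      (fun h => absurd (Finset.mem_univ _) h)]
    rw [Matrix.one_apply_eq, map_one, one_mul, heq1]
  -- the y's are fixed by D
  have hyfix : ∀ σ ∈ D, ∀ p : ↥D × Qt, σ • y p = y p := by
    rintro σ hσ ⟨e, q⟩
    show σ • ∑ d : ↥D, ι (M d e) * xv (↑d * rep q) = ∑ d : ↥D, ι (M d e) * xv (↑d * rep q)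
    rw [Finset.smul_sum]
    have hterm : ∀ d : ↥D, σ • (ι (M d e) * xv (↑d * rep q)) =
        ι (M ((⟨σ, hσ⟩ : ↥D) * d) e) * xv (↑((⟨σ, hσ⟩ : ↥D) * d) * rep q) := by
      intro d
      rw [smul_mul']
      have h1 : σ • ι (M d e) = ι (β σ (M d e)) := hC σ (M d e)
      have h2 : σ • xv (↑d * rep q) = xv (σ * (↑d * rep q)) := hX σ _
      rw [h1, h2]
      congr 1
      · show ι (β σ (β ↑d (bD e))) = ι (β (σ * ↑d) (bD e))
        rw [map_mul β]
        rfl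
      · show xv (σ * (↑d * rep q)) = xv ((σ * ↑d) * rep q)
        rw [mul_assoc]
    rw [Finset.sum_congr rfl fun d _ => hterm d]
    exact Fintype.sum_equiv (Equiv.mulLeft (⟨σ, hσ⟩ : ↥D)) _ _ (fun d => rfl)
  refine ⟨Set.range y, hindy.coe_range, ?_⟩
  set F₀ : IntermediateField ↥K'' Ω := IntermediateField.adjoin ↥K'' (Set.range y) with hF₀def
  have hK''fix : K'' ≤ fixedSubfield A Ω D := by
    rintro _ ⟨c, hc, rfl⟩ σ hσ
    show σ • ι c = ι c
    have h1 : σ • ι c = ι (β σ c) := hC σ c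
    rw [h1]
    congr 1
    exact hc (β σ) (Subgroup.mem_map_of_mem β hσ)
  have hSfix : ∀ z ∈ Set.range y, z ∈ fixedSubfield A Ω D := by
    rintro _ ⟨p, rfl⟩
    exact fun σ hσ => hyfix σ hσ p
  have hFfix : F₀ ≤ Subfield.extendScalars hK''fix := by
    rw [IntermediateField.adjoin_le_iff]
    intro z hz
    exact hSfix z hz
  -- faithfulness of the D-action on Ω
  haveI : FaithfulSMul ↥D Ω := by
    constructor
    intro d₁ d₂ h
    have h2 : ∀ d : ↥D, (d : ↥D) • xv 1 = xv ↑d := by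
      intro d
      show (↑d : A) • φ (MvPolynomial.X 1) = _
      rw [hX, mul_one]
    have h1 := h (xv 1)
    rw [h2 d₁, h2 d₂] at h1
    exact Subtype.ext (MvPolynomial.X_injective (hφinj h1))
  have hEfix_eq : fixedSubfield A Ω D = FixedPoints.subfield ↥D Ω := by
    ext z
    exact ⟨fun h σ => h ↑σ σ.2, fun h σ hσ => h ⟨σ, hσ⟩⟩
  have hErank : finrank ↥(fixedSubfield A Ω D) Ω = Fintype.card ↥D := by
    rw [finrank_subfield_congr hEfix_eq, FixedPoints.finrank_eq_card ↥D Ω]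
  -- elements of K'' are in F₀
  have hιKsF₀ : ∀ k : ↥K's, ι ↑k ∈ F₀ := fun k => F₀.algebraMap_mem ⟨ι ↑k, hK''memc k⟩
  -- ι of any element of L is integral over F₀
  have hKmem : ∀ k : K, algebraMap K L k ∈ K's := fun k σ hσ => σ.commutes k
  let κ : K →+* ↥F₀ :=
    { toFun := fun k => ⟨ι (algebraMap K L k), hιKsF₀ ⟨algebraMap K L k, hKmem k⟩⟩
      map_one' := Subtype.ext (by show ι (algebraMap K L 1) = 1; rw [map_one, map_one])
      map_mul' := fun k₁ k₂ => Subtype.ext (by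
        show ι (algebraMap K L (k₁ * k₂)) = ι (algebraMap K L k₁) * ι (algebraMap K L k₂)
        rw [map_mul, map_mul])
      map_zero' := Subtype.ext (by show ι (algebraMap K L 0) = 0; rw [map_zero, map_zero])
      map_add' := fun k₁ k₂ => Subtype.ext (by
        show ι (algebraMap K L (k₁ + k₂)) = ι (algebraMap K L k₁) + ι (algebraMap K L k₂)
        rw [map_add, map_add]) }
  have hιint : ∀ c : L, IsIntegral ↥F₀ (ι c) := by
    intro c
    obtain ⟨p, hmonic, hp⟩ := IsIntegral.of_finite K c
    refine ⟨p.map κ, hmonic.map κ, ?_⟩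
    rw [Polynomial.eval₂_map]
    have hcomp : (algebraMap ↥F₀ Ω).comp κ = ι.comp (algebraMap K L) := RingHom.ext fun k => rfl
    rw [hcomp, ← Polynomial.hom_eval₂, hp, map_zero]
  -- the subalgebra generated by ι of the basis elements is all of Ω
  set s : Set Ω := Set.range fun d : ↥D => ι (bD d) with hsdef
  set V : Subalgebra ↥F₀ Ω := Algebra.adjoin ↥F₀ s with hVdef
  have hVfg : (Subalgebra.toSubmodule V).FG :=
    fg_adjoin_of_finite (Set.finite_range _) (by rintro _ ⟨d, rfl⟩; exact hιint _)
  have hsV : s ⊆ V := Algebra.subset_adjoin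
  have hreprι : ∀ c : L, ι c = ∑ d : ↥D, ι ↑(bD.repr c d) * ι (bD d) := by
    intro c
    conv_lhs => rw [← bD.sum_repr c]
    rw [map_sum]
    refine Finset.sum_congr rfl fun d _ => ?_
    show ι (↑(bD.repr c d) * bD d) = _
    rw [map_mul]
  have hιLV : ∀ c : L, ι c ∈ V := by
    intro c
    rw [hreprι c]
    refine Subalgebra.sum_mem V fun d _ => ?_
    exact V.mul_mem (V.algebraMap_mem ⟨ι ↑(bD.repr c d), hιKsF₀ _⟩) (hsV ⟨d, rfl⟩)
  have hyF₀ : ∀ p : ↥D × Qt, y p ∈ F₀ := fun p => IntermediateField.subset_adjoin _ _ ⟨p, rfl⟩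
  have hxV : ∀ a : A, xv a ∈ V := by
    intro a
    rw [hxspan a]
    refine Subalgebra.sum_mem V fun dd _ => ?_
    exact V.mul_mem (hιLV _) (V.algebraMap_mem ⟨y (dd, ⟦a⟧), hyF₀ _⟩)
  have hφV : ∀ p : MvPolynomial A L, φ p ∈ V := by
    intro p
    induction p using MvPolynomial.induction_on with
    | C c => exact hιLV c
    | add p q hp hq => rw [map_add]; exact V.add_mem hp hq
    | mul_X p a hp => rw [map_mul]; exact V.mul_mem hp (hxV a)
  have hVinv : ∀ w : Ω, w ∈ V → w ≠ 0 → w⁻¹ ∈ V := by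
    intro w hw hw0
    have hint : IsIntegral ↥F₀ w := IsIntegral.of_mem_of_fg V hVfg w hw
    exact V.inv_mem_of_algebraic (x := ⟨w, hw⟩) hint.isAlgebraic
  have hVtop : ∀ z : Ω, z ∈ V := by
    intro z
    obtain ⟨p, q, hq, hz⟩ := IsFractionRing.div_surjective (A := MvPolynomial A L) z
    rw [← hz, div_eq_mul_inv]
    refine V.mul_mem (hφV p) (hVinv _ (hφV q) ?_)
    intro h0
    exact nonZeroDivisors.ne_zero hq (hφinj (by rw [h0, map_zero]))
  -- hence the F₀-span of ι(basis) is all of Ω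
  set W : Submodule ↥F₀ Ω := Submodule.span ↥F₀ s with hWdef
  have hιLW : ∀ c : L, ι c ∈ W := by
    intro c
    rw [hreprι c]
    refine Submodule.sum_mem _ fun d _ => ?_
    have : ι ↑(bD.repr c d) * ι (bD d) = (⟨ι ↑(bD.repr c d), hιKsF₀ _⟩ : ↥F₀) • ι (bD d) := rfl
    rw [this]
    exact Submodule.smul_mem _ _ (Submodule.subset_span ⟨d, rfl⟩)
  have hWmul : ∀ z₁ z₂ : Ω, z₁ ∈ W → z₂ ∈ W → z₁ * z₂ ∈ W := by
    intro z₁ z₂ h₁ h₂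
    have hWW : W * W ≤ W := by
      rw [hWdef, Submodule.span_mul_span, Submodule.span_le]
      rintro _ ⟨_, ⟨d, rfl⟩, _, ⟨d', rfl⟩, rfl⟩
      show ι (bD d) * ι (bD d') ∈ W
      rw [← map_mul]
      exact hιLW _
    exact hWW (Submodule.mul_mem_mul h₁ h₂)
  have hWtop : ∀ z : Ω, z ∈ W := by
    let WA : Subalgebra ↥F₀ Ω :=
      { carrier := W
        mul_mem' := fun h₁ h₂ => hWmul _ _ h₁ h₂
        one_mem' := by rw [show (1 : Ω) = ι 1 from (map_one ι).symm]; exact hιLW 1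
        add_mem' := fun h₁ h₂ => W.add_mem h₁ h₂
        zero_mem' := W.zero_mem
        algebraMap_mem' := fun r => by
          rw [Algebra.algebraMap_eq_smul_one]
          refine W.smul_mem r ?_
          rw [show (1 : Ω) = ι 1 from (map_one ι).symm]
          exact hιLW 1 }
    intro z
    have hVW : V ≤ WA := Algebra.adjoin_le (fun w hw => Submodule.subset_span hw)
    exact hVW (hVtop z)
  haveI hFDΩ : FiniteDimensional ↥F₀ Ω := by
    refine ⟨⟨Finset.univ.image fun d : ↥D => ι (bD d), ?_⟩⟩
    rw [Finset.coe_image, Finset.coe_univ, Set.image_univ]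
    exact Submodule.eq_top_iff'.mpr hWtop
  have hrankF₀ : finrank ↥F₀ Ω ≤ Fintype.card ↥D := by
    have h1 : Submodule.span ↥F₀ s = (⊤ : Submodule ↥F₀ Ω) :=
      Submodule.eq_top_iff'.mpr hWtop
    have h2 : finrank ↥F₀ ↥(Submodule.span ↥F₀ s) ≤ s.toFinset.card :=
      finrank_span_le_card s
    have h3 := h1 ▸ h2
    rw [finrank_top] at h3
    refine h3.trans ?_
    have h4 : s.toFinset ⊆ Finset.univ.image fun d : ↥D => ι (bD d) := by
      intro z hz
      rw [Set.mem_toFinset] at hz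
      obtain ⟨d, rfl⟩ := hz
      exact Finset.mem_image.mpr ⟨d, Finset.mem_univ d, rfl⟩
    exact (Finset.card_le_card h4).trans
      (Finset.card_image_le.trans (le_of_eq Finset.card_univ))
  -- tower argument
  have hF₀E : F₀.toSubfield ≤ fixedSubfield A Ω D := fun z hz => hFfix hz
  set T : IntermediateField ↥F₀ Ω := Subfield.extendScalars hF₀E with hTdef
  have hTrank : finrank ↥T Ω = Fintype.card ↥D := hErank
  haveI : FiniteDimensional ↥F₀ ↥T := inferInstance
  have htower : finrank ↥F₀ ↥T * finrank ↥T Ω = finrank ↥F₀ Ω := finrank_mul_finrank ↥F₀ ↥T Ω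
  have hTone : finrank ↥F₀ ↥T = 1 := by
    have hpos : 0 < finrank ↥T Ω := by rw [hTrank]; exact Fintype.card_pos
    have hposT : 0 < finrank ↥F₀ ↥T := finrank_pos
    have hle : finrank ↥F₀ ↥T * finrank ↥T Ω ≤ 1 * finrank ↥T Ω := by
      rw [htower, one_mul, hTrank]
      exact hrankF₀
    have := Nat.le_of_mul_le_mul_right hle hpos
    omega
  have hTbot : T = ⊥ := IntermediateField.finrank_eq_one_iff.mp hTone
  intro x
  constructor
  · intro hx
    have hxT : x ∈ T := hx
    rw [hTbot, IntermediateField.mem_bot] at hxT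
    obtain ⟨f, rfl⟩ := hxT
    exact f.2
  · intro hx σ hσ
    exact hFfix hx σ hσ
end

section
/- Let F be a field, f_c ∈ F[X] a monic polynomial of degree d, and suppose the F-algebra L' = F[X]/(f_c) contains d elements x₁, …, x_d which are roots of f_c and such that ∏_{k ≠ l}(x_k − x_l) is a unit in L'. Then f_c is separable, and for every monic irreducible factor f of f_c over F, the field L = F[X]/(f) is a splitting field of f_c over F; in particular L/F is a Galois extension and all irreducible factors of f_c generate the same extension. -/
open Polynomial

lemma aux17 {F : Type*} [Field F] {fc : Polynomial F} {d : ℕ}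
    (hd : fc.natDegree = d) {L : Type*} [Field L] [Algebra F L]
    (y : Fin d → L) (hroot : ∀ k, Polynomial.aeval (y k) fc = 0)
    (hfc0 : fc ≠ 0) (hinj : Function.Injective y) :
    (fc.map (algebraMap F L)).Splits ∧ fc.Separable := by
  classical
  set g := fc.map (algebraMap F L) with hg
  have hg0 : g ≠ 0 := Polynomial.map_ne_zero hfc0
  have hmem : ∀ k, y k ∈ g.roots := by
    intro k
    rw [Polynomial.mem_roots hg0]
    have := hroot k
    rwa [Polynomial.aeval_def, Polynomial.eval₂_eq_eval_map] at this
  have hsub : Finset.univ.image y ⊆ g.roots.toFinset := by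
    intro a ha
    obtain ⟨k, -, rfl⟩ := Finset.mem_image.mp ha
    exact Multiset.mem_toFinset.mpr (hmem k)
  have hcard1 : d ≤ g.roots.toFinset.card := by
    calc d = (Finset.univ.image y).card := by
            rw [Finset.card_image_of_injective _ hinj, Finset.card_univ, Fintype.card_fin]
      _ ≤ g.roots.toFinset.card := Finset.card_le_card hsub
  have hcard2 : g.roots.toFinset.card ≤ Multiset.card g.roots := Multiset.toFinset_card_le _
  have hcard3 : Multiset.card g.roots ≤ g.natDegree := Polynomial.card_roots' g
  have hdeg : g.natDegree = d := by rw [hg, Polynomial.natDegree_map, hd]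
  have hcardeq : Multiset.card g.roots = g.natDegree := le_antisymm hcard3 (hdeg ▸ hcard1.trans hcard2)
  have hsplits : g.Splits := Polynomial.splits_iff_card_roots.mpr hcardeq
  have hsplits' : (fc.map (algebraMap F L)).Splits := by
    exact hsplits
  refine ⟨hsplits', ?_⟩
  have hnodup : g.roots.Nodup := by
    rw [← Multiset.toFinset_card_eq_card_iff_nodup]
    omega
  have : g.Separable := (Polynomial.nodup_roots_iff_of_splits hg0 hsplits).mp hnodup
  exact (Polynomial.separable_map (algebraMap F L)).mp this

theorem stmt17 {F : Type*} [Field F] (fc : Polynomial F) {d : ℕ}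
    (hd : fc.natDegree = d) (hmonic : fc.Monic)
    -- `L' = F[X]/(f_c)` contains `d` roots of `f_c` whose pairwise differences have
    -- an invertible product:
    (x : Fin d → AdjoinRoot fc)
    (hroot : ∀ k, Polynomial.aeval (x k) fc = 0)
    (hunit : IsUnit (∏ p ∈ Finset.univ.offDiag, (x p.1 - x p.2))) :
    -- then `f_c` is separable, and for every monic irreducible factor `f` of `f_c`,
    -- `F[X]/(f)` is a splitting field of `f_c` over `F`; in particular it is a Galois
    -- extension of `F` (so all irreducible factors generate the same extension):
    fc.Separable ∧
      ∀ f : Polynomial F, f.Monic → ∀ hf : Irreducible f, f ∣ fc →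
        letI : Fact (Irreducible f) := ⟨hf⟩
        Polynomial.IsSplittingField F (AdjoinRoot f) fc ∧ IsGalois F (AdjoinRoot f) := by
  classical
  have hfc0 : fc ≠ 0 := hmonic.ne_zero
  -- key construction for each irreducible factor
  have key : ∀ f : Polynomial F, ∀ hf : Irreducible f, f ∣ fc →
      letI : Fact (Irreducible f) := ⟨hf⟩
      (fc.map (algebraMap F (AdjoinRoot f))).Splits ∧ fc.Separable := by
    intro f hf hdvd
    letI : Fact (Irreducible f) := ⟨hf⟩
    have hfroot : Polynomial.aeval (AdjoinRoot.root f) fc = 0 := by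
      obtain ⟨g, rfl⟩ := hdvd
      simp [map_mul, AdjoinRoot.aeval_eq, AdjoinRoot.mk_self]
    let π : AdjoinRoot fc →ₐ[F] AdjoinRoot f :=
      AdjoinRoot.liftAlgHom fc (Algebra.ofId F (AdjoinRoot f)) (AdjoinRoot.root f) hfroot
    set y : Fin d → AdjoinRoot f := fun k => π (x k) with hy
    have hyroot : ∀ k, Polynomial.aeval (y k) fc = 0 := by
      intro k
      rw [hy]
      rw [Polynomial.aeval_algHom_apply, hroot k, map_zero]
    have hyinj : Function.Injective y := by
      intro k l hkl
      by_contra hne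
      have hmem : (k, l) ∈ Finset.univ.offDiag := by
        simp [Finset.mem_offDiag, hne]
      have hu : IsUnit (∏ p ∈ Finset.univ.offDiag, (y p.1 - y p.2)) := by
        have := hunit.map π
        rw [map_prod] at this
        simpa only [map_sub] using this
      have h0 : (∏ p ∈ Finset.univ.offDiag, (y p.1 - y p.2)) = 0 :=
        Finset.prod_eq_zero hmem (by rw [hkl, sub_self])
      rw [h0] at hu
      exact (not_isUnit_zero hu)
    exact aux17 hd y hyroot hfc0 hyinj
  have hsep : fc.Separable := by
    by_cases hu : fc.natDegree = 0
    · have : fc = 1 := hmonic.natDegree_eq_zero.mp hu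
      rw [this]; exact Polynomial.separable_one
    · have hnu : ¬ IsUnit fc := by
        intro h
        exact hu (Polynomial.natDegree_eq_zero_of_isUnit h)
      obtain ⟨g, hgi, hgd⟩ := WfDvdMonoid.exists_irreducible_factor hnu hfc0
      have hg0 : g ≠ 0 := hgi.ne_zero
      have hgi' : Irreducible (normalize g) := (associated_normalize g).irreducible hgi
      have hgd' : normalize g ∣ fc := (associated_normalize g).symm.dvd.trans hgd
      exact (key _ hgi' hgd').2
  refine ⟨hsep, ?_⟩
  intro f hfm hf hdvd
  letI : Fact (Irreducible f) := ⟨hf⟩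
  obtain ⟨hsplits, -⟩ := key f hf hdvd
  have hfroot : Polynomial.aeval (AdjoinRoot.root f) fc = 0 := by
    obtain ⟨g, rfl⟩ := hdvd
    simp [map_mul, AdjoinRoot.aeval_eq, AdjoinRoot.mk_self]
  have hmemroot : AdjoinRoot.root f ∈ fc.rootSet (AdjoinRoot f) :=
    (Polynomial.mem_rootSet_of_ne hfc0).mpr hfroot
  have hadj : Algebra.adjoin F (fc.rootSet (AdjoinRoot f)) = ⊤ := by
    rw [eq_top_iff, ← AdjoinRoot.adjoinRoot_eq_top (f := f)]
    exact Algebra.adjoin_mono (Set.singleton_subset_iff.mpr hmemroot)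
  haveI hsf : Polynomial.IsSplittingField F (AdjoinRoot f) fc := ⟨hsplits, hadj⟩
  exact ⟨hsf, IsGalois.of_separable_splitting_field hsep⟩
end
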